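/- Let S be a finite set of size s and cost : S × S → ℝ symmetric with cost(u,u)=0. If R is a uniformly random r-element subset of S with 2 ≤ r ≤ s, then E[(∑_{{u,v}∈Δ(R)} cost(u,v))³] = ∑_{{u,v}∈Δ(S)} ∑_{{x,y}∈Δ(S)} ∑_{{c,d}∈Δ(S)} ((r)_θ/(s)_θ) · cost(u,v)·cost(x,y)·cost(c,d), where θ = θ(u,v,x,y,c,d) is the number of distinct elements among u,v,x,y,c,d (and 2 ≤ θ ≤ 6). -/

import Mathlib

open Finset

private lemma card_filter_superset {α : Type*} [DecidableEq α]
    (S T : Finset α) (hT : T ⊆ S) (r : ℕ) (htr : T.card ≤ r) :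
    ((S.powersetCard r).filter (fun R => T ⊆ R)).card
      = (S.card - T.card).choose (r - T.card) := by
  rw [← card_sdiff_of_subset hT, ← Finset.card_powersetCard]
  apply Finset.card_nbij' (fun R => R \ T) (fun R => R ∪ T)
  · intro R hR
    simp only [mem_coe, mem_filter, mem_powersetCard] at hR
    obtain ⟨⟨hRS, hRc⟩, hTR⟩ := hR
    simp only [mem_coe, mem_powersetCard]
    exact ⟨sdiff_subset_sdiff hRS le_rfl, by rw [card_sdiff_of_subset hTR, hRc]⟩
  · intro R hR
    simp only [mem_coe, mem_powersetCard] at hR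
    obtain ⟨hRS, hRc⟩ := hR
    have hd : Disjoint R T := disjoint_of_subset_left hRS sdiff_disjoint
    simp only [mem_coe, mem_filter, mem_powersetCard]
    refine ⟨⟨union_subset (hRS.trans sdiff_subset) hT, ?_⟩, subset_union_right⟩
    rw [card_union_of_disjoint hd, hRc]
    omega
  · intro R hR
    simp only [mem_coe, mem_filter, mem_powersetCard] at hR
    exact sdiff_union_of_subset hR.2
  · intro R hR
    simp only [mem_coe, mem_powersetCard] at hR
    have hd : Disjoint R T := disjoint_of_subset_left hR.1 sdiff_disjoint
    beta_reduce
    rw [union_sdiff_right, sdiff_eq_self_of_disjoint hd]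

private lemma cube_expand {α : Type*} [DecidableEq α] (R : Finset α) (f : α → α → ℝ) :
    (∑ u ∈ R, ∑ v ∈ R, f u v)^3
      = ∑ u ∈ R, ∑ v ∈ R, ∑ x ∈ R, ∑ y ∈ R, ∑ c ∈ R, ∑ d ∈ R, f c d * (f x y * f u v) := by
  simp only [pow_succ', pow_zero, mul_one, sum_mul, mul_sum]

private lemma ratio_eq (s r t : ℕ) (hrs : r ≤ s) (hts : t ≤ s) (htr : t ≤ r) :
    ((s - t).choose (r - t) : ℝ) / (s.choose r : ℝ)
      = (r.descFactorial t : ℝ) / (s.descFactorial t : ℝ) := by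
  have h1 := Nat.choose_mul (n := s) htr
  rw [Nat.descFactorial_eq_factorial_mul_choose, Nat.descFactorial_eq_factorial_mul_choose]
  have hc : (0:ℝ) < (s.choose r : ℝ) := by exact_mod_cast Nat.choose_pos hrs
  have hd : (0:ℝ) < ((t.factorial * s.choose t : ℕ) : ℝ) := by
    exact_mod_cast Nat.mul_pos t.factorial_pos (Nat.choose_pos hts)
  rw [div_eq_div_iff hc.ne' hd.ne']
  have h1' : ((s.choose r : ℝ) * r.choose t) = (s.choose t : ℝ) * (s - t).choose (r - t) := by
    exact_mod_cast h1
  push_cast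
  linear_combination (-(t.factorial : ℝ)) * h1'

private lemma sum_comm6 {α β : Type*} (P : Finset β) (S : Finset α)
    (F : β → α → α → α → α → α → α → ℝ) :
    ∑ R ∈ P, ∑ u ∈ S, ∑ v ∈ S, ∑ x ∈ S, ∑ y ∈ S, ∑ c ∈ S, ∑ d ∈ S, F R u v x y c d
      = ∑ u ∈ S, ∑ v ∈ S, ∑ x ∈ S, ∑ y ∈ S, ∑ c ∈ S, ∑ d ∈ S, ∑ R ∈ P, F R u v x y c d := by
  rw [Finset.sum_comm]
  refine sum_congr rfl fun u _ => ?_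
  rw [Finset.sum_comm]
  refine sum_congr rfl fun v _ => ?_
  rw [Finset.sum_comm]
  refine sum_congr rfl fun x _ => ?_
  rw [Finset.sum_comm]
  refine sum_congr rfl fun y _ => ?_
  rw [Finset.sum_comm]
  refine sum_congr rfl fun c _ => ?_
  exact Finset.sum_comm

private lemma sum_indicator {α : Type*} [DecidableEq α] {R S : Finset α} (hRS : R ⊆ S)
    (h : α → ℝ) : ∑ a ∈ R, h a = ∑ a ∈ S, if a ∈ R then h a else 0 := by
  rw [Finset.sum_ite_mem, Finset.inter_eq_right.mpr hRS]

/-- For uniformly random `r`-subsets `R` of `S`, the expectation of the cube of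
`∑_{{u,v}∈Δ(R)} cost(u,v)` equals the triple sum over ordered pairs of distinct
tips, weighted by `(r)_θ/(s)_θ` where `θ` is the number of distinct elements among
the six tips.  Unordered pair sums are written as half the ordered sums (whence the
overall factor `1/8` on the right-hand side). -/
theorem expectation_cube_pair_sum {α : Type*} [DecidableEq α]
    (S : Finset α) (s r : ℕ) (hs : S.card = s) (cost : α → α → ℝ)
    (hsym : ∀ u v, cost u v = cost v u) (hdiag : ∀ u, cost u u = 0)
    (h2 : 2 ≤ r) (hrs : r ≤ s) :
    (∑ R ∈ S.powersetCard r, ((∑ u ∈ R, ∑ v ∈ R.erase u, cost u v) / 2) ^ 3) /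
        ((s.choose r : ℝ))
      = (1 / 8) *
        ∑ u ∈ S, ∑ v ∈ S.erase u, ∑ x ∈ S, ∑ y ∈ S.erase x, ∑ c ∈ S, ∑ d ∈ S.erase c,
          ((r.descFactorial (({u, v, x, y, c, d} : Finset α).card) : ℝ) /
              (s.descFactorial (({u, v, x, y, c, d} : Finset α).card) : ℝ)) *
            (cost u v * cost x y * cost c d) := by
  subst hs
  set P := S.powersetCard r with hP
  -- remove `erase` on the left
  have hL : ∀ R : Finset α, ∑ u ∈ R, ∑ v ∈ R.erase u, cost u v
      = ∑ u ∈ R, ∑ v ∈ R, cost u v :=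
    fun R => Finset.sum_congr rfl fun u _ => Finset.sum_erase _ (hdiag u)
  -- remove `erase` on the right
  have hRHS :
      (∑ u ∈ S, ∑ v ∈ S.erase u, ∑ x ∈ S, ∑ y ∈ S.erase x, ∑ c ∈ S, ∑ d ∈ S.erase c,
          ((r.descFactorial (({u, v, x, y, c, d} : Finset α).card) : ℝ) /
              ((S.card).descFactorial (({u, v, x, y, c, d} : Finset α).card) : ℝ)) *
            (cost u v * cost x y * cost c d))
      = ∑ u ∈ S, ∑ v ∈ S, ∑ x ∈ S, ∑ y ∈ S, ∑ c ∈ S, ∑ d ∈ S,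
          ((r.descFactorial (({u, v, x, y, c, d} : Finset α).card) : ℝ) /
              ((S.card).descFactorial (({u, v, x, y, c, d} : Finset α).card) : ℝ)) *
            (cost u v * cost x y * cost c d) := by
    refine sum_congr rfl fun u _ => ?_
    rw [Finset.sum_erase _ (by simp [hdiag])]
    refine sum_congr rfl fun v _ => sum_congr rfl fun x _ => ?_
    rw [Finset.sum_erase _ (by simp [hdiag])]
    refine sum_congr rfl fun y _ => sum_congr rfl fun c _ => ?_
    exact Finset.sum_erase _ (by simp [hdiag])
  rw [hRHS]
  -- the key identity
  have key : (∑ R ∈ P, (∑ u ∈ R, ∑ v ∈ R, cost u v)^3) / ((S.card).choose r : ℝ)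
      = ∑ u ∈ S, ∑ v ∈ S, ∑ x ∈ S, ∑ y ∈ S, ∑ c ∈ S, ∑ d ∈ S,
          ((r.descFactorial (({u, v, x, y, c, d} : Finset α).card) : ℝ) /
              ((S.card).descFactorial (({u, v, x, y, c, d} : Finset α).card) : ℝ)) *
            (cost u v * cost x y * cost c d) := by
    have main : ∑ R ∈ P, (∑ u ∈ R, ∑ v ∈ R, cost u v)^3
        = ∑ u ∈ S, ∑ v ∈ S, ∑ x ∈ S, ∑ y ∈ S, ∑ c ∈ S, ∑ d ∈ S,
            ((P.filter (fun R => ({u, v, x, y, c, d} : Finset α) ⊆ R)).card : ℝ) *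
              (cost c d * (cost x y * cost u v)) := by
      have step1 : ∑ R ∈ P, (∑ u ∈ R, ∑ v ∈ R, cost u v)^3
          = ∑ R ∈ P, ∑ u ∈ S, ∑ v ∈ S, ∑ x ∈ S, ∑ y ∈ S, ∑ c ∈ S, ∑ d ∈ S,
              if ({u, v, x, y, c, d} : Finset α) ⊆ R then
                cost c d * (cost x y * cost u v) else 0 := by
        refine sum_congr rfl fun R hR => ?_
        have hRS : R ⊆ S := (mem_powersetCard.mp hR).1
        rw [cube_expand]
        refine (sum_indicator hRS _).trans (sum_congr rfl fun u _ => ?_)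
        by_cases hu : u ∈ R
        · simp only [if_pos hu]
          refine (sum_indicator hRS _).trans (sum_congr rfl fun v _ => ?_)
          by_cases hv : v ∈ R
          · simp only [if_pos hv]
            refine (sum_indicator hRS _).trans (sum_congr rfl fun x _ => ?_)
            by_cases hx : x ∈ R
            · simp only [if_pos hx]
              refine (sum_indicator hRS _).trans (sum_congr rfl fun y _ => ?_)
              by_cases hy : y ∈ R
              · simp only [if_pos hy]
                refine (sum_indicator hRS _).trans (sum_congr rfl fun c _ => ?_)
                by_cases hc : c ∈ R
                · simp only [if_pos hc]
                  refine (sum_indicator hRS _).trans (sum_congr rfl fun d _ => ?_)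
                  by_cases hd : d ∈ R
                  · rw [if_pos hd, if_pos]
                    simp only [insert_subset_iff, singleton_subset_iff]
                    tauto
                  · rw [if_neg hd, if_neg]
                    simp only [insert_subset_iff, singleton_subset_iff]
                    tauto
                · have hns : ∀ d : α, ¬ ({u, v, x, y, c, d} : Finset α) ⊆ R := by
                    intro d h
                    simp only [insert_subset_iff, singleton_subset_iff] at h
                    tauto
                  simp [hc, hns]
              · have hns : ∀ c d : α, ¬ ({u, v, x, y, c, d} : Finset α) ⊆ R := by
                  intro c d h
                  simp only [insert_subset_iff, singleton_subset_iff] at h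
                  tauto
                simp [hy, hns]
            · have hns : ∀ y c d : α, ¬ ({u, v, x, y, c, d} : Finset α) ⊆ R := by
                intro y c d h
                simp only [insert_subset_iff, singleton_subset_iff] at h
                tauto
              simp [hx, hns]
          · have hns : ∀ x y c d : α, ¬ ({u, v, x, y, c, d} : Finset α) ⊆ R := by
              intro x y c d h
              simp only [insert_subset_iff, singleton_subset_iff] at h
              tauto
            simp [hv, hns]
        · have hns : ∀ v x y c d : α, ¬ ({u, v, x, y, c, d} : Finset α) ⊆ R := by
            intro v x y c d h
            simp only [insert_subset_iff, singleton_subset_iff] at h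
            tauto
          simp [hu, hns]
      rw [step1, sum_comm6]
      refine sum_congr rfl fun u _ => sum_congr rfl fun v _ => sum_congr rfl fun x _ =>
        sum_congr rfl fun y _ => sum_congr rfl fun c _ => sum_congr rfl fun d _ => ?_
      rw [← Finset.sum_filter, Finset.sum_const, nsmul_eq_mul]
    rw [main]
    simp only [Finset.sum_div]
    refine sum_congr rfl fun u hu => sum_congr rfl fun v hv => sum_congr rfl fun x hx =>
      sum_congr rfl fun y hy => sum_congr rfl fun c hc => sum_congr rfl fun d hd => ?_
    set T : Finset α := {u, v, x, y, c, d} with hT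
    have hTS : T ⊆ S := by
      simp only [hT, insert_subset_iff, singleton_subset_iff]
      tauto
    have hratio : ((P.filter (fun R => T ⊆ R)).card : ℝ) / ((S.card).choose r : ℝ)
        = (r.descFactorial T.card : ℝ) / ((S.card).descFactorial T.card : ℝ) := by
      by_cases htr : T.card ≤ r
      · rw [hP, card_filter_superset S T hTS r htr]
        exact ratio_eq S.card r T.card hrs (card_le_card hTS) htr
      · have hc0 : (P.filter (fun R => T ⊆ R)).card = 0 := by
          rw [Finset.card_eq_zero, Finset.filter_eq_empty_iff]
          intro R hR hTR
          exact htr ((card_le_card hTR).trans (mem_powersetCard.mp hR).2.le)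
        have hd0 : r.descFactorial T.card = 0 :=
          Nat.descFactorial_eq_zero_iff_lt.mpr (lt_of_not_ge htr)
        simp [hc0, hd0]
    have hre : ((P.filter (fun R => T ⊆ R)).card : ℝ) * (cost c d * (cost x y * cost u v))
          / ((S.card).choose r : ℝ)
        = (((P.filter (fun R => T ⊆ R)).card : ℝ) / ((S.card).choose r : ℝ)) *
            (cost u v * cost x y * cost c d) := by ring
    rw [hre, hratio]
  -- finish
  have hcube : ∀ z : ℝ, (z / 2)^3 = (1/8) * z^3 := fun z => by ring
  calc (∑ R ∈ P, ((∑ u ∈ R, ∑ v ∈ R.erase u, cost u v) / 2) ^ 3) / ((S.card).choose r : ℝ)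
      = (∑ R ∈ P, (1/8) * (∑ u ∈ R, ∑ v ∈ R, cost u v)^3) / ((S.card).choose r : ℝ) := by
        congr 1
        exact sum_congr rfl fun R _ => by rw [hL R, hcube]
    _ = (1/8) * ((∑ R ∈ P, (∑ u ∈ R, ∑ v ∈ R, cost u v)^3) / ((S.card).choose r : ℝ)) := by
        rw [← Finset.mul_sum, mul_div_assoc]
    _ = _ := by rw [key]
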